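/- arXiv:1907.02834 — 2 statements merged into one kernel-verified Lean document; each statement's English description precedes it below -/
import Mathlib

section
/- The n-th order suffix abstraction forms an idempotent semiring: the structure (2^{W(n)}, ∪, ⊙, ∅, {ε}), where U ⊙ V = { suff_n(uv) | u ∈ U, v ∈ V }, satisfies all idempotent-semiring axioms. -/
/-- Words of length at most `n`. -/
def Wn (Act : Type*) (n : ℕ) : Set (List Act) := { w | w.length ≤ n }

/-- `suff n w` is the suffix of `w` of length `min n |w|`. -/
def suff {Act : Type*} (n : ℕ) (w : List Act) : List Act := w.drop (w.length - n)

/-- Product of the `n`-th order suffix abstraction. -/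
def smul {Act : Type*} (n : ℕ) (U V : Set (List Act)) : Set (List Act) :=
  { w | ∃ u ∈ U, ∃ v ∈ V, w = suff n (u ++ v) }

section Aux
variable {Act : Type*} {n : ℕ}

lemma suff_of_le {w : List Act} (h : w.length ≤ n) : suff n w = w := by
  simp [suff, Nat.sub_eq_zero_of_le h]

lemma suff_suff {m : ℕ} (h : m ≤ n) (w : List Act) : suff m (suff n w) = suff m w := by
  simp only [suff, List.drop_drop, List.length_drop]
  congr 1
  omega

lemma suff_append_right {v : List Act} (h : n ≤ v.length) (u : List Act) :
    suff n (u ++ v) = suff n v := by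
  simp only [suff, List.length_append]
  rw [show u.length + v.length - n = u.length + (v.length - n) by omega]
  rw [List.drop_length_add_append]

lemma suff_append_of_lt {v : List Act} (h : v.length < n) (u : List Act) :
    suff n (u ++ v) = suff (n - v.length) u ++ v := by
  simp only [suff, List.length_append]
  rw [List.drop_append,
    show u.length + v.length - n - u.length = 0 from by omega, List.drop_zero,
    show u.length + v.length - n = u.length - (n - v.length) from by omega]

lemma suff_append_left (u v : List Act) : suff n (suff n u ++ v) = suff n (u ++ v) := by
  rcases le_or_gt n v.length with h | h
  · rw [suff_append_right h, suff_append_right h]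
  · rw [suff_append_of_lt h, suff_append_of_lt h, suff_suff (by omega)]

lemma suff_append_right' (u v : List Act) : suff n (u ++ suff n v) = suff n (u ++ v) := by
  rcases le_or_gt v.length n with h | h
  · rw [suff_of_le h]
  · rw [suff_append_right (le_of_eq (by simp [suff]; omega)),
      suff_suff le_rfl, suff_append_right h.le]

end Aux

theorem suffix_abstraction_idem_semiring {Act : Type*} (n : ℕ) :
    -- union is associative, commutative, idempotent with neutral element ∅
    (∀ U V Z : Set (List Act), (U ∪ V) ∪ Z = U ∪ (V ∪ Z)) ∧
    (∀ U V : Set (List Act), U ∪ V = V ∪ U) ∧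
    (∀ U : Set (List Act), U ∪ U = U) ∧
    (∀ U : Set (List Act), U ∪ ∅ = U) ∧
    -- ⊙ is associative, with unit {ε} and annihilator ∅ on subsets of W(n)
    (∀ U V Z : Set (List Act), U ⊆ Wn Act n → V ⊆ Wn Act n → Z ⊆ Wn Act n →
      smul n (smul n U V) Z = smul n U (smul n V Z)) ∧
    (∀ U : Set (List Act), U ⊆ Wn Act n → smul n U {([] : List Act)} = U) ∧
    (∀ U : Set (List Act), U ⊆ Wn Act n → smul n {([] : List Act)} U = U) ∧
    (∀ U : Set (List Act), smul n U ∅ = ∅) ∧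
    (∀ U : Set (List Act), smul n ∅ U = ∅) ∧
    -- ⊙ distributes over ∪
    (∀ U V Z : Set (List Act), smul n U (V ∪ Z) = smul n U V ∪ smul n U Z) ∧
    (∀ U V Z : Set (List Act), smul n (U ∪ V) Z = smul n U Z ∪ smul n V Z) := by
  refine ⟨fun U V Z => Set.union_assoc U V Z, fun U V => Set.union_comm U V,
    fun U => Set.union_self U, fun U => Set.union_empty U, ?_, ?_, ?_, ?_, ?_, ?_, ?_⟩
  · intro U V Z _ _ _
    ext w
    simp only [smul, Set.mem_setOf_eq]
    constructor
    · rintro ⟨_, ⟨u, hu, v, hv, rfl⟩, z, hz, rfl⟩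
      exact ⟨u, hu, suff n (v ++ z), ⟨v, hv, z, hz, rfl⟩, by
        rw [suff_append_right', suff_append_left, List.append_assoc]⟩
    · rintro ⟨u, hu, _, ⟨v, hv, z, hz, rfl⟩, rfl⟩
      exact ⟨suff n (u ++ v), ⟨u, hu, v, hv, rfl⟩, z, hz, by
        rw [suff_append_right', suff_append_left, List.append_assoc]⟩
  · intro U hU
    ext w
    simp only [smul, Set.mem_setOf_eq, Set.mem_singleton_iff]
    constructor
    · rintro ⟨u, hu, v, rfl, rfl⟩
      simpa [suff_of_le (hU hu)] using hu
    · intro hw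
      exact ⟨w, hw, [], rfl, by simp [suff_of_le (hU hw)]⟩
  · intro U hU
    ext w
    simp only [smul, Set.mem_setOf_eq, Set.mem_singleton_iff]
    constructor
    · rintro ⟨u, rfl, v, hv, rfl⟩
      simpa [suff_of_le (hU hv)] using hv
    · intro hw
      exact ⟨[], rfl, w, hw, by simp [suff_of_le (hU hw)]⟩
  · intro U; ext w; simp [smul]
  · intro U; ext w; simp [smul]
  · intro U V Z
    ext w
    simp only [smul, Set.mem_union, Set.mem_setOf_eq]
    constructor
    · rintro ⟨u, hu, v, hv | hv, rfl⟩
      · exact Or.inl ⟨u, hu, v, hv, rfl⟩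
      · exact Or.inr ⟨u, hu, v, hv, rfl⟩
    · rintro (⟨u, hu, v, hv, rfl⟩ | ⟨u, hu, v, hv, rfl⟩)
      · exact ⟨u, hu, v, Or.inl hv, rfl⟩
      · exact ⟨u, hu, v, Or.inr hv, rfl⟩
  · intro U V Z
    ext w
    simp only [smul, Set.mem_union, Set.mem_setOf_eq]
    constructor
    · rintro ⟨u, hu | hu, v, hv, rfl⟩
      · exact Or.inl ⟨u, hu, v, hv, rfl⟩
      · exact Or.inr ⟨u, hu, v, hv, rfl⟩
    · rintro (⟨u, hu, v, hv, rfl⟩ | ⟨u, hu, v, hv, rfl⟩)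
      · exact ⟨u, Or.inl hu, v, hv, rfl⟩
      · exact ⟨u, Or.inr hu, v, hv, rfl⟩
end

section
/- In the prefix abstraction of order l, prepending stabilizes shuffles of long words: for any words x = x₁…x_l of length exactly l (viewed as a sequence), any word w, and any letter x₀, pref_l(x₀ · s) ranges over the same set whether s ranges over x₁…x_l ⧢ w or over x₁…x_{l-1} ⧢ w; i.e., {pref_l(x₀·s) | s ∈ (x₁…x_l) ⧢ w} = {pref_l(x₀·s) | s ∈ (x₁…x_{l−1}) ⧢ w}. -/
/-- Shuffle with synchronization: complementary heads may synchronize into `τ`. -/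
def sh {Act : Type*} [DecidableEq Act] (τ : Act) (bar : Act → Act) :
    List Act → List Act → Set (List Act)
  | [], w' => {w'}
  | w, [] => {w}
  | a :: u, b :: v =>
    (fun s => a :: s) '' sh τ bar u (b :: v) ∪
    (fun s => b :: s) '' sh τ bar (a :: u) v ∪
    (if b = bar a then (fun s => τ :: s) '' sh τ bar u v else ∅)

lemma sh_nil_left {Act : Type*} [DecidableEq Act] (τ : Act) (bar : Act → Act) (w : List Act) :
    sh τ bar [] w = {w} := by simp [sh]

lemma sh_nil_right {Act : Type*} [DecidableEq Act] (τ : Act) (bar : Act → Act) (w : List Act) :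
    sh τ bar w [] = {w} := by cases w <;> simp [sh]

lemma sh_cons_cons {Act : Type*} [DecidableEq Act] (τ : Act) (bar : Act → Act)
    (a b : Act) (u v : List Act) :
    sh τ bar (a :: u) (b :: v) =
      (fun s => a :: s) '' sh τ bar u (b :: v) ∪
      (fun s => b :: s) '' sh τ bar (a :: u) v ∪
      (if b = bar a then (fun s => τ :: s) '' sh τ bar u v else ∅) := by rw [sh]

lemma sh_nonempty {Act : Type*} [DecidableEq Act] (τ : Act) (bar : Act → Act) :
    ∀ u w : List Act, (sh τ bar u w).Nonempty
  | [], w => ⟨w, by rw [sh_nil_left]; rfl⟩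
  | a :: u, [] => ⟨a :: u, by rw [sh_nil_right]; rfl⟩
  | a :: u, b :: w => by
    obtain ⟨s, hs⟩ := sh_nonempty τ bar u (b :: w)
    exact ⟨a :: s, by rw [sh_cons_cons]; exact Or.inl (Or.inl ⟨s, hs, rfl⟩)⟩

lemma sh_take_subset {Act : Type*} [DecidableEq Act] (τ : Act) (bar : Act → Act) :
    ∀ (k : ℕ) (w u v : List Act), u.take k = v.take k → k ≤ u.length → k ≤ v.length →
      (List.take k) '' sh τ bar u w ⊆ (List.take k) '' sh τ bar v w := by
  intro k
  induction k with
  | zero =>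
    intro w u v _ _ _ s hs
    obtain ⟨t, ht⟩ := sh_nonempty τ bar v w
    obtain ⟨s', _, rfl⟩ := hs
    exact ⟨t, ht, rfl⟩
  | succ k ih =>
    intro w
    induction w with
    | nil =>
      intro u v htake hu hv s hs
      match u, v, hu, hv with
      | a :: u', a' :: v', _, _ =>
        obtain ⟨s', hs', rfl⟩ := hs
        rw [sh_nil_right] at hs'
        rw [Set.mem_singleton_iff] at hs'
        subst hs'
        exact ⟨a' :: v', by rw [sh_nil_right]; rfl, htake.symm⟩
    | cons b w' ihw =>
      intro u v htake hu hv s hs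
      match u, v, hu, hv with
      | a :: u', a' :: v', hu, hv =>
        have ha : a = a' := by
          have := congrArg (fun t => t.head?) htake
          simpa using this
        subst ha
        simp only [List.length_cons, Nat.succ_le_succ_iff] at hu hv
        have htake' : u'.take k = v'.take k := by
          have := congrArg List.tail htake
          simpa [List.take_succ_cons] using this
        obtain ⟨s', hs', rfl⟩ := hs
        rw [sh_cons_cons] at hs'
        rcases hs' with ((⟨s₁, hs₁, rfl⟩ | ⟨s₁, hs₁, rfl⟩) | hsync)
        · obtain ⟨t₁, ht₁, ht⟩ := ih (b :: w') u' v' htake' hu hv ⟨s₁, hs₁, rfl⟩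
          exact ⟨a :: t₁, by rw [sh_cons_cons]; exact Or.inl (Or.inl ⟨t₁, ht₁, rfl⟩),
            by simp [List.take_succ_cons, ht]⟩
        · obtain ⟨t₁, ht₁, ht⟩ := ihw (a :: u') (a :: v') htake
            (by simpa using Nat.succ_le_succ hu) (by simpa using Nat.succ_le_succ hv)
            ⟨s₁, hs₁, rfl⟩
          have ht2 : List.take k t₁ = List.take k s₁ := by
            have := congrArg (List.take k) ht
            simpa [List.take_take] using this
          exact ⟨b :: t₁, by rw [sh_cons_cons]; exact Or.inl (Or.inr ⟨t₁, ht₁, rfl⟩),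
            by simp [List.take_succ_cons, ht2]⟩
        · by_cases hb : b = bar a
          · rw [if_pos hb] at hsync
            obtain ⟨s₁, hs₁, rfl⟩ := hsync
            obtain ⟨t₁, ht₁, ht⟩ := ih w' u' v' htake' hu hv ⟨s₁, hs₁, rfl⟩
            refine ⟨τ :: t₁, ?_, by simp [List.take_succ_cons, ht]⟩
            rw [sh_cons_cons, if_pos hb]
            exact Or.inr ⟨t₁, ht₁, rfl⟩
          · rw [if_neg hb] at hsync
            exact absurd hsync (Set.notMem_empty _)

theorem prefix_shuffle_dropLast {Act : Type*} [DecidableEq Act] (τ : Act) (bar : Act → Act)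
    (hinv : ∀ a, bar (bar a) = a) (l : ℕ) (x : List Act) (hx : x.length = l)
    (w : List Act) (x₀ : Act) :
    (fun s => (x₀ :: s).take l) '' sh τ bar x w
      = (fun s => (x₀ :: s).take l) '' sh τ bar x.dropLast w := by
  cases l with
  | zero =>
    rw [List.length_eq_zero_iff] at hx
    subst hx
    rfl
  | succ k =>
    have hfun : (fun s : List Act => (x₀ :: s).take (k + 1))
        = (fun t => x₀ :: t) ∘ (List.take k) := by
      funext s; simp [List.take_succ_cons]
    have hd : x.dropLast = x.take k := by
      rw [List.dropLast_eq_take, hx]; rfl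
    have h1 : x.take k = x.dropLast.take k := by
      rw [hd, List.take_take]; simp
    have hlu : k ≤ x.length := by omega
    have hlv : k ≤ x.dropLast.length := by
      rw [List.length_dropLast, hx]; omega
    have := Set.Subset.antisymm
      (sh_take_subset τ bar k w x x.dropLast h1 hlu hlv)
      (sh_take_subset τ bar k w x.dropLast x h1.symm hlv hlu)
    rw [hfun, Set.image_comp, Set.image_comp, this]
end
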